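/- Let n, m, r be natural numbers with m < n, 1 ≤ r and r + n + 1 ≤ 2m. Let α, β, γ, δ : Fin n → Fin n be full transformations, each of rank r + 1, such that α·β = γ·δ and rank(α·β) = r. Then, in the free semigroup on the alphabet X = {μ ∈ T_n : r + 1 ≤ rank(μ) ≤ r + 2}, the pair (x_α·x_β, x_γ·x_δ) lies in the congruence generated by R = {(x_μ·x_ν, x_{μν}) : r + 1 ≤ rank(μ), rank(ν), rank(μ·ν) ≤ r + 2}; that is, x_α x_β = x_γ x_δ is a consequence of R. -/

import Mathlib

/-- The full transformation monoid on `Fin n`: all maps `Fin n → Fin n`, with `α * β`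
meaning "first apply `α`, then `β`". -/
def Tn (n : ℕ) : Type := Fin n → Fin n

/-- The underlying function of a full transformation. -/
def Tn.toFun {n : ℕ} (f : Tn n) : Fin n → Fin n := f

instance (n : ℕ) : Semigroup (Tn n) where
  mul f g := (fun x => g.toFun (f.toFun x) : Fin n → Fin n)
  mul_assoc _ _ _ := rfl

/-- The rank of a full transformation: the cardinality of its range. -/
def trank {n : ℕ} (f : Tn n) : ℕ := (Finset.image f.toFun Finset.univ).card

/-- The alphabet `X_{i,m}`: full transformations `a` with `i ≤ rank a ≤ m`. -/
abbrev TX (n m i : ℕ) : Type := {a : Tn n // i ≤ trank a ∧ trank a ≤ m}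

/-- The relations `R_{i,m}` of the restricted Cayley table presentation. -/
def TRel (n m i : ℕ) : FreeSemigroup (TX n m i) → FreeSemigroup (TX n m i) → Prop :=
  fun u v =>
    ∃ (a b : Tn n) (ha : i ≤ trank a ∧ trank a ≤ m)
      (hb : i ≤ trank b ∧ trank b ≤ m) (hab : i ≤ trank (a * b) ∧ trank (a * b) ≤ m),
      u = FreeSemigroup.of (⟨a, ha⟩ : TX n m i) * FreeSemigroup.of (⟨b, hb⟩ : TX n m i) ∧
      v = FreeSemigroup.of (⟨a * b, hab⟩ : TX n m i)

namespace Stmt13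

open FreeSemigroup Finset

variable {n r : ℕ}

lemma mul_app (f g : Tn n) (x : Fin n) : (f * g) x = g (f x) := rfl

/-- the range as a finset -/
def rim {n : ℕ} (f : Tn n) : Finset (Fin n) := Finset.image (f : Fin n → Fin n) Finset.univ

lemma mem_rim {f : Tn n} {y : Fin n} : y ∈ rim f ↔ ∃ x, f x = y := by
  unfold rim
  exact ⟨fun h => by obtain ⟨x, -, hx⟩ := Finset.mem_image.1 h; exact ⟨x, hx⟩,
    fun ⟨x, hx⟩ => Finset.mem_image.2 ⟨x, Finset.mem_univ _, hx⟩⟩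

lemma trank_rim (f : Tn n) : trank f = (rim f).card := rfl

lemma exists_not_mem {s : Finset (Fin n)} (h : s.card < n) : ∃ x, x ∉ s := by
  by_contra hc
  push_neg at hc
  have := Finset.card_le_card (fun x _ => hc x : Finset.univ ⊆ s)
  simp at this
  omega

abbrev Rel (n r : ℕ) := conGen (TRel n (r + 2) (r + 1))

abbrev In (r : ℕ) (f : Tn n) : Prop := r + 1 ≤ trank f ∧ trank f ≤ r + 2

lemma relBasic {μ ν : Tn n} (hμ : In r μ) (hν : In r ν) (hμν : In r (μ * ν)) :
    Rel n r (of (⟨μ, hμ⟩ : TX n (r+2) (r+1)) * of (⟨ν, hν⟩ : TX n (r+2) (r+1)))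
      (of (⟨μ * ν, hμν⟩ : TX n (r+2) (r+1))) :=
  ConGen.Rel.of _ _ ⟨μ, ν, hμ, hν, hμν, rfl, rfl⟩

/-- The basic move: `x_{μν} x_ρ ~ x_μ x_{νρ}`. -/
lemma relMove {lam μ ν ρ σ : Tn n} (h1 : μ * ν = lam) (h2 : ν * ρ = σ)
    (hlam : In r lam) (hμ : In r μ) (hν : In r ν) (hρ : In r ρ) (hσ : In r σ) :
    Rel n r (of (⟨lam, hlam⟩ : TX n (r+2) (r+1)) * of (⟨ρ, hρ⟩ : TX n (r+2) (r+1)))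
      (of (⟨μ, hμ⟩ : TX n (r+2) (r+1)) * of (⟨σ, hσ⟩ : TX n (r+2) (r+1))) := by
  subst h1 h2
  refine ConGen.Rel.trans
    (ConGen.Rel.mul (ConGen.Rel.symm (relBasic hμ hν hlam)) (ConGen.Rel.refl _)) ?_
  rw [mul_assoc]
  exact ConGen.Rel.mul (ConGen.Rel.refl _) (relBasic hν hρ hσ)

/-- Pigeonhole: a map whose rank exceeds by one the rank of a map it refines has a
unique "split pair" of values. -/
lemma split_unique [NeZero n] (f e : Fin n → Fin n) (href : ∀ x y, f x = f y → e x = e y)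
    (hcard : (Finset.image e Finset.univ).card + 1 = (Finset.image f Finset.univ).card) :
    ∃ a a' w, a ≠ a' ∧ (∃ x, f x = a) ∧ (∃ x, f x = a') ∧
      (∀ x, f x = a → e x = w) ∧ (∀ x, f x = a' → e x = w) ∧
      (∀ x y, e x = e y → f x ≠ f y →
        (f x = a ∧ f y = a') ∨ (f x = a' ∧ f y = a)) := by
  classical
  haveI : Nonempty (Fin n) := ⟨⟨0, Nat.pos_of_ne_zero (NeZero.ne n)⟩⟩
  set F := Finset.image f Finset.univ with hF
  set E := Finset.image e Finset.univ with hE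
  set φ : Fin n → Fin n := fun v => e (Function.invFun f v) with hφ
  have hφf : ∀ x, φ (f x) = e x := by
    intro x
    apply href
    exact Function.invFun_eq ⟨x, rfl⟩
  have hmaps : ∀ v ∈ F, φ v ∈ E := by
    intro v hv
    obtain ⟨x, -, rfl⟩ := Finset.mem_image.1 hv
    rw [hφf]; exact Finset.mem_image_of_mem _ (Finset.mem_univ x)
  obtain ⟨a, ha, a', ha', hne, hφeq⟩ :=
    Finset.exists_ne_map_eq_of_card_lt_of_maps_to (by omega) hmaps
  refine ⟨a, a', φ a, hne, ?_, ?_, ?_, ?_, ?_⟩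
  · obtain ⟨x, -, hx⟩ := Finset.mem_image.1 ha; exact ⟨x, hx⟩
  · obtain ⟨x, -, hx⟩ := Finset.mem_image.1 ha'; exact ⟨x, hx⟩
  · intro x hx; rw [← hφf x, hx]
  · intro x hx; rw [← hφf x, hx, hφeq]
  · have hinj : ∀ ⦃u⦄, u ∈ F.erase a' → ∀ ⦃v⦄, v ∈ F.erase a' → φ u = φ v → u = v := by
      have hsurj : ∀ b ∈ E, ∃ u, ∃ _ : u ∈ F.erase a', φ u = b := by
        intro b hb
        obtain ⟨x, -, rfl⟩ := Finset.mem_image.1 hb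
        by_cases hx : f x = a'
        · exact ⟨a, Finset.mem_erase.2 ⟨hne, ha⟩, by rw [hφeq, ← hx, hφf]⟩
        · exact ⟨f x, Finset.mem_erase.2 ⟨hx, Finset.mem_image_of_mem _ (Finset.mem_univ x)⟩,
            hφf x⟩
      have hcard2 : (F.erase a').card ≤ E.card := by
        rw [Finset.card_erase_of_mem ha']
        omega
      exact fun u hu v hv huv =>
        Finset.inj_on_of_surj_on_of_card_le (fun u _ => φ u)
          (fun u hu => hmaps u (Finset.mem_of_mem_erase hu)) hsurj hcard2 hu hv huv
    intro x y hexy hfxy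
    have h1 : φ (f x) = φ (f y) := by rw [hφf, hφf, hexy]
    have hfx : f x ∈ F := Finset.mem_image_of_mem _ (Finset.mem_univ x)
    have hfy : f y ∈ F := Finset.mem_image_of_mem _ (Finset.mem_univ y)
    by_cases hx : f x = a'
    · right
      refine ⟨hx, ?_⟩
      have hy : f y ≠ a' := fun h => hfxy (hx.trans h.symm)
      have : φ (f y) = φ a := by rw [← h1, hx, hφeq]
      exact hinj (Finset.mem_erase.2 ⟨hy, hfy⟩) (Finset.mem_erase.2 ⟨hne, ha⟩) this
    · by_cases hy : f y = a'
      · left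
        refine ⟨?_, hy⟩
        have : φ (f x) = φ a := by rw [h1, hy, hφeq]
        exact hinj (Finset.mem_erase.2 ⟨hx, hfx⟩) (Finset.mem_erase.2 ⟨hne, ha⟩) this
      · exact absurd (hinj (Finset.mem_erase.2 ⟨hx, hfx⟩) (Finset.mem_erase.2 ⟨hy, hfy⟩) h1)
          hfxy

/-- canonical right factor: `lam * ρ = ε` with image `insert t (rim ε)`. -/
lemma rhoFor [NeZero n] (ε lam : Tn n) (t : Fin n)
    (href : ∀ x y, lam x = lam y → ε x = ε y) (hlt : trank lam < n) :
    ∃ ρ : Tn n, lam * ρ = ε ∧ rim ρ = insert t (rim ε) := by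
  classical
  haveI : Nonempty (Fin n) := ⟨⟨0, Nat.pos_of_ne_zero (NeZero.ne n)⟩⟩
  refine ⟨(fun y => if y ∈ rim lam then ε (Function.invFun (lam : Fin n → Fin n) y) else t),
    ?_, ?_⟩
  · funext x
    refine (mul_app _ _ x).trans ?_
    simp only [if_pos (mem_rim.2 ⟨x, rfl⟩)]
    exact href _ _ (Function.invFun_eq ⟨x, rfl⟩)
  · apply Finset.Subset.antisymm
    · intro y hy
      obtain ⟨x, rfl⟩ := mem_rim.1 hy
      by_cases hx : x ∈ rim lam
      · simp only [if_pos hx]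
        exact Finset.mem_insert_of_mem (mem_rim.2 ⟨_, rfl⟩)
      · simp only [if_neg hx]
        exact Finset.mem_insert_self _ _
    · intro y hy
      obtain ⟨z, hz⟩ : ∃ z, z ∉ rim lam := exists_not_mem (by rw [← trank_rim]; exact hlt)
      rcases Finset.mem_insert.1 hy with h | h
      · exact mem_rim.2 ⟨z, by simp only [if_neg hz, h]⟩
      · obtain ⟨x, rfl⟩ := mem_rim.1 h
        refine mem_rim.2 ⟨lam x, ?_⟩
        simp only [if_pos (mem_rim.2 ⟨x, rfl⟩)]
        exact href _ _ (Function.invFun_eq ⟨x, rfl⟩)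

lemma pairing_card_le [NeZero n] (ε f g : Tn n) (B : Finset (Fin n))
    (S : Finset (Fin n × Fin n))
    (hfg : ∀ x y, ε x = ε y → ε x ∉ B → f x = f y ∧ g x = g y)
    (hS : ∀ x, ε x ∈ B → (f x, g x) ∈ S) :
    (Finset.image (fun x => (f x, g x)) Finset.univ).card ≤ ((rim ε) \ B).card + S.card := by
  classical
  haveI : Nonempty (Fin n) := ⟨⟨0, Nat.pos_of_ne_zero (NeZero.ne n)⟩⟩
  have hsub : Finset.image (fun x => (f x, g x)) Finset.univ ⊆
      ((rim ε) \ B).image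
        (fun w => (f (Function.invFun (ε : Fin n → Fin n) w),
                   g (Function.invFun (ε : Fin n → Fin n) w))) ∪ S := by
    intro p hp
    obtain ⟨x, -, rfl⟩ := Finset.mem_image.1 hp
    by_cases hx : ε x ∈ B
    · exact Finset.mem_union_right _ (hS x hx)
    · apply Finset.mem_union_left
      apply Finset.mem_image.2
      refine ⟨ε x, Finset.mem_sdiff.2 ⟨mem_rim.2 ⟨x, rfl⟩, hx⟩, ?_⟩
      have hinv : ε (Function.invFun (ε : Fin n → Fin n) (ε x)) = ε x :=
        Function.invFun_eq ⟨x, rfl⟩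
      obtain ⟨h1, h2⟩ := hfg _ x hinv (by rw [hinv]; exact hx)
      rw [h1, h2]
  calc (Finset.image (fun x => (f x, g x)) Finset.univ).card
      ≤ _ := Finset.card_le_card hsub
    _ ≤ _ := Finset.card_union_le _ _
    _ ≤ _ := by gcongr; exact Finset.card_image_le

/-- The canonical selector of the fibers of the pairing of `f` and `g`. -/
noncomputable def sel {n : ℕ} (f g : Fin n → Fin n) : Fin n → Fin n := fun x =>
  (Finset.univ.filter (fun y => f y = f x ∧ g y = g x)).min'
    ⟨x, Finset.mem_filter.2 ⟨Finset.mem_univ x, rfl, rfl⟩⟩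

lemma sel_spec {n : ℕ} (f g : Fin n → Fin n) (x : Fin n) :
    f (sel f g x) = f x ∧ g (sel f g x) = g x := by
  have := Finset.min'_mem (Finset.univ.filter (fun y => f y = f x ∧ g y = g x))
    ⟨x, Finset.mem_filter.2 ⟨Finset.mem_univ x, rfl, rfl⟩⟩
  exact (Finset.mem_filter.1 this).2

lemma sel_card_le {n : ℕ} (f g : Fin n → Fin n) :
    (Finset.image (sel f g) Finset.univ).card ≤
      (Finset.image (fun x => (f x, g x)) Finset.univ).card := by
  apply Finset.card_le_card_of_injOn (fun y => (f y, g y))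
  · intro a ha
    obtain ⟨x, -, rfl⟩ := Finset.mem_image.1 ha
    obtain ⟨h1, h2⟩ := sel_spec f g x
    beta_reduce
    rw [h1, h2]
    exact Finset.mem_image_of_mem _ (Finset.mem_univ x)
  · intro u hu v hv huv
    simp only [Finset.coe_image, Set.mem_image] at hu hv
    obtain ⟨x, -, rfl⟩ := hu
    obtain ⟨y, -, rfl⟩ := hv
    obtain ⟨h1, h2⟩ := sel_spec f g x
    obtain ⟨h3, h4⟩ := sel_spec f g y
    simp only [Prod.mk.injEq, h1, h2, h3, h4] at huv
    unfold sel
    congr 1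
    ext z
    simp [huv.1, huv.2]

/-- Lemma L: two factorizations with the same left letter are equivalent. -/
lemma lemL (hn : r + 3 ≤ n) (ε al be de : Tn n)
    (he1 : al * be = ε) (he2 : al * de = ε)
    (hra : trank al = r + 1) (hrb : trank be = r + 1) (hrd : trank de = r + 1)
    (hrε : trank ε = r)
    (hIa : In r al) (hIb : In r be) (hId : In r de) :
    Rel n r (of (⟨al, hIa⟩ : TX n (r+2) (r+1)) * of (⟨be, hIb⟩ : TX n (r+2) (r+1)))
      (of (⟨al, hIa⟩ : TX n (r+2) (r+1)) * of (⟨de, hId⟩ : TX n (r+2) (r+1))) := by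
  classical
  have hε1 : ∀ x, be (al x) = ε x := fun x => congrFun he1 x
  have hε2 : ∀ x, de (al x) = ε x := fun x => congrFun he2 x
  have hWsubβ : rim ε ⊆ rim be := by
    intro w hw
    obtain ⟨x, hx⟩ := mem_rim.1 hw
    exact mem_rim.2 ⟨al x, by rw [hε1, hx]⟩
  have hWsubδ : rim ε ⊆ rim de := by
    intro w hw
    obtain ⟨x, hx⟩ := mem_rim.1 hw
    exact mem_rim.2 ⟨al x, by rw [hε2, hx]⟩
  have hbex : (rim be \ rim ε).Nonempty := by
    rw [← Finset.card_pos, Finset.card_sdiff_of_subset hWsubβ, ← trank_rim, ← trank_rim, hrb, hrε]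
    omega
  obtain ⟨b, hb⟩ := hbex
  obtain ⟨hbβ, hbW⟩ := Finset.mem_sdiff.1 hb
  have hdex : (rim de \ rim ε).Nonempty := by
    rw [← Finset.card_pos, Finset.card_sdiff_of_subset hWsubδ, ← trank_rim, ← trank_rim, hrd, hrε]
    omega
  obtain ⟨d, hd⟩ := hdex
  obtain ⟨hdδ, hdW⟩ := Finset.mem_sdiff.1 hd
  have hrimβ : rim be = insert b (rim ε) := by
    apply (Finset.eq_of_subset_of_card_le _ _).symm
    · intro y hy
      rcases Finset.mem_insert.1 hy with h | h
      · rw [h]; exact hbβ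
      · exact hWsubβ h
    · rw [Finset.card_insert_of_notMem hbW, ← trank_rim, ← trank_rim, hrb, hrε]
  have hrimδ : rim de = insert d (rim ε) := by
    apply (Finset.eq_of_subset_of_card_le _ _).symm
    · intro y hy
      rcases Finset.mem_insert.1 hy with h | h
      · rw [h]; exact hdδ
      · exact hWsubδ h
    · rw [Finset.card_insert_of_notMem hdW, ← trank_rim, ← trank_rim, hrd, hrε]
  have hβδ : ∀ y ∈ rim al, be y = de y := by
    intro y hy
    obtain ⟨x, rfl⟩ := mem_rim.1 hy
    rw [hε1, hε2]
  obtain ⟨a, haim, a', haim', hne, hcol⟩ :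
      ∃ x ∈ rim al, ∃ y ∈ rim al, x ≠ y ∧ be x = be y := by
    apply Finset.exists_ne_map_eq_of_card_lt_of_maps_to (t := rim ε)
    · rw [← trank_rim, ← trank_rim, hra, hrε]; omega
    · intro y hy
      obtain ⟨x, rfl⟩ := mem_rim.1 hy
      rw [hε1]
      exact mem_rim.2 ⟨x, rfl⟩
  obtain ⟨eE, heE⟩ : ∃ eE, eE ∉ insert b (insert d (rim ε)) := by
    apply exists_not_mem
    calc (insert b (insert d (rim ε))).card ≤ (insert d (rim ε)).card + 1 :=
          Finset.card_insert_le _ _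
      _ ≤ (rim ε).card + 1 + 1 := by gcongr; exact Finset.card_insert_le _ _
      _ < n := by rw [← trank_rim, hrε]; omega
  have heEb : eE ≠ b := fun h => heE (h ▸ Finset.mem_insert_self _ _)
  have heEd : eE ≠ d := fun h => heE (h ▸ Finset.mem_insert_of_mem (Finset.mem_insert_self _ _))
  have heEW : eE ∉ rim ε := fun h => heE (Finset.mem_insert_of_mem (Finset.mem_insert_of_mem h))
  set T : Finset (Fin n) := insert b (insert d (rim ε)) with hT
  set μm : Tn n := (fun y => if y ∈ T then y else be a') with hμm
  set ν : Tn n := (fun y => if y = a' then eE else be y) with hν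
  set ν' : Tn n := (fun y => if y = a' then eE else de y) with hν'
  have hbea'W : be a' ∈ rim ε := by
    obtain ⟨x, rfl⟩ := mem_rim.1 haim'
    rw [hε1]; exact mem_rim.2 ⟨x, rfl⟩
  have hνμ : ν * μm = be := by
    funext y
    rw [mul_app]
    by_cases hy : y = a'
    · simp only [hν, hy, if_pos rfl]
      show μm eE = be a'
      simp only [hμm, if_neg (fun h => heE h)]
    · simp only [hν, if_neg hy]
      show μm (be y) = be y
      have : be y ∈ T := by
        have : be y ∈ rim be := mem_rim.2 ⟨y, rfl⟩
        rw [hrimβ] at this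
        rcases Finset.mem_insert.1 this with h | h
        · rw [h]; exact Finset.mem_insert_self _ _
        · exact Finset.mem_insert_of_mem (Finset.mem_insert_of_mem h)
      simp only [hμm, if_pos this]
  have hν'μ : ν' * μm = de := by
    funext y
    rw [mul_app]
    by_cases hy : y = a'
    · simp only [hν', hy, if_pos rfl]
      show μm eE = de a'
      simp only [hμm, if_neg (fun h => heE h)]
      rw [hβδ a' haim']
    · simp only [hν', if_neg hy]
      show μm (de y) = de y
      have : de y ∈ T := by
        have : de y ∈ rim de := mem_rim.2 ⟨y, rfl⟩
        rw [hrimδ] at this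
        rcases Finset.mem_insert.1 this with h | h
        · rw [h]; exact Finset.mem_insert_of_mem (Finset.mem_insert_self _ _)
        · exact Finset.mem_insert_of_mem (Finset.mem_insert_of_mem h)
      simp only [hμm, if_pos this]
  have hαν : al * ν = al * ν' := by
    funext x
    rw [mul_app, mul_app]
    by_cases hy : al x = a'
    · simp only [hν, hν', hy, if_pos rfl]
    · simp only [hν, hν', if_neg hy]
      exact hβδ (al x) (mem_rim.2 ⟨x, rfl⟩)
  have hrimμ : rim μm = T := by
    apply Finset.Subset.antisymm
    · intro y hy
      obtain ⟨x, rfl⟩ := mem_rim.1 hy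
      by_cases hx : x ∈ T
      · simpa only [hμm, if_pos hx] using hx
      · simp only [hμm, if_neg hx]
        exact Finset.mem_insert_of_mem (Finset.mem_insert_of_mem hbea'W)
    · intro y hy
      exact mem_rim.2 ⟨y, by simp only [hμm, if_pos hy]⟩
  have hIμ : In r μm := by
    constructor
    · rw [trank_rim, hrimμ, hT]
      have : insert d (rim ε) ⊆ insert b (insert d (rim ε)) := Finset.subset_insert _ _
      calc r + 1 = (insert d (rim ε)).card := by
            rw [Finset.card_insert_of_notMem hdW, ← trank_rim, hrε]
        _ ≤ _ := Finset.card_le_card this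
    · rw [trank_rim, hrimμ, hT]
      calc (insert b (insert d (rim ε))).card ≤ (insert d (rim ε)).card + 1 :=
            Finset.card_insert_le _ _
        _ ≤ (rim ε).card + 1 + 1 := by gcongr; exact Finset.card_insert_le _ _
        _ = r + 2 := by rw [← trank_rim, hrε]
  have hrimν : rim ν = insert eE (rim be) := by
    apply Finset.Subset.antisymm
    · intro y hy
      obtain ⟨x, rfl⟩ := mem_rim.1 hy
      by_cases hx : x = a'
      · simp only [hν, if_pos hx]
        exact Finset.mem_insert_self _ _
      · simp only [hν, if_neg hx]
        exact Finset.mem_insert_of_mem (mem_rim.2 ⟨x, rfl⟩)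
    · intro y hy
      rcases Finset.mem_insert.1 hy with h | h
      · exact mem_rim.2 ⟨a', by simp only [hν, if_pos rfl, h]⟩
      · obtain ⟨x, rfl⟩ := mem_rim.1 h
        by_cases hx : x = a'
        · refine mem_rim.2 ⟨a, ?_⟩
          simp only [hν, if_neg hne]
          rw [hcol, hx]
        · exact mem_rim.2 ⟨x, by simp only [hν, if_neg hx]⟩
  have heErimbe : eE ∉ rim be := by
    rw [hrimβ]
    intro h
    rcases Finset.mem_insert.1 h with h | h
    · exact heEb h
    · exact heEW h
  have hIν : In r ν := by
    rw [In, trank_rim, hrimν, Finset.card_insert_of_notMem heErimbe, ← trank_rim, hrb]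
    omega
  have hrimν' : rim ν' = insert eE (rim de) := by
    apply Finset.Subset.antisymm
    · intro y hy
      obtain ⟨x, rfl⟩ := mem_rim.1 hy
      by_cases hx : x = a'
      · simp only [hν', if_pos hx]
        exact Finset.mem_insert_self _ _
      · simp only [hν', if_neg hx]
        exact Finset.mem_insert_of_mem (mem_rim.2 ⟨x, rfl⟩)
    · intro y hy
      rcases Finset.mem_insert.1 hy with h | h
      · exact mem_rim.2 ⟨a', by simp only [hν', if_pos rfl, h]⟩
      · obtain ⟨x, rfl⟩ := mem_rim.1 h
        by_cases hx : x = a'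
        · refine mem_rim.2 ⟨a, ?_⟩
          simp only [hν', if_neg hne]
          rw [← hβδ a haim, hcol, hx, hβδ a' haim']
        · exact mem_rim.2 ⟨x, by simp only [hν', if_neg hx]⟩
  have heErimde : eE ∉ rim de := by
    rw [hrimδ]
    intro h
    rcases Finset.mem_insert.1 h with h | h
    · exact heEd h
    · exact heEW h
  have hIν' : In r ν' := by
    rw [In, trank_rim, hrimν', Finset.card_insert_of_notMem heErimde, ← trank_rim, hrd]
    omega
  have hrimαν : rim (al * ν) = insert eE (rim ε) := by
    apply Finset.Subset.antisymm
    · intro y hy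
      obtain ⟨x, rfl⟩ := mem_rim.1 hy
      rw [mul_app]
      by_cases hx : al x = a'
      · simp only [hν, if_pos hx]
        exact Finset.mem_insert_self _ _
      · simp only [hν, if_neg hx]
        rw [hε1]
        exact Finset.mem_insert_of_mem (mem_rim.2 ⟨x, rfl⟩)
    · intro y hy
      rcases Finset.mem_insert.1 hy with h | h
      · obtain ⟨x, hx⟩ := mem_rim.1 haim'
        refine mem_rim.2 ⟨x, ?_⟩
        rw [mul_app]
        simp only [hν, if_pos hx, h]
      · obtain ⟨x, rfl⟩ := mem_rim.1 h
        by_cases hx : al x = a'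
        · obtain ⟨x'', hx''⟩ := mem_rim.1 haim
          refine mem_rim.2 ⟨x'', ?_⟩
          rw [mul_app]
          have : al x'' ≠ a' := by rw [hx'']; exact hne
          simp only [hν, if_neg this]
          rw [hx'', hcol, ← hx, ← hε1, hx]
        · exact mem_rim.2 ⟨x, by rw [mul_app]; simp only [hν, if_neg hx]; exact hε1 x⟩
  have hIαν : In r (al * ν) := by
    rw [In, trank_rim, hrimαν, Finset.card_insert_of_notMem heEW, ← trank_rim, hrε]
    omega
  have step1 := relMove (r := r) (rfl : al * ν = al * ν) hνμ hIαν hIa hIν hIμ hIb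
  have step2 := relMove (r := r) (rfl : al * ν' = al * ν') hν'μ (hαν ▸ hIαν) hIa hIν' hIμ hId
  refine ConGen.Rel.trans (ConGen.Rel.symm step1) ?_
  have : (⟨al * ν, hIαν⟩ : TX n (r+2) (r+1)) = ⟨al * ν', hαν ▸ hIαν⟩ := Subtype.ext hαν
  rw [this]
  exact step2

/-- Lemma S: two factorizations of the same element whose left letters have
compatible kernels are equivalent. -/
lemma lemS (hn : r + 3 ≤ n) (ε lam lam' rho rho' : Tn n) (t : Fin n)
    (he1 : lam * rho = ε) (he2 : lam' * rho' = ε)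
    (hrl : trank lam = r + 1) (hrl' : trank lam' = r + 1)
    (hrr : trank rho = r + 1) (hrr' : trank rho' = r + 1)
    (hrε : trank ε = r) (htW : t ∉ rim ε) (ht1 : t ∈ rim rho) (ht2 : t ∈ rim rho')
    (hpair : (Finset.image (fun x => (lam x, lam' x)) Finset.univ).card ≤ r + 2)
    (hIl : In r lam) (hIl' : In r lam') (hIr : In r rho) (hIr' : In r rho') :
    Rel n r (of (⟨lam, hIl⟩ : TX n (r+2) (r+1)) * of (⟨rho, hIr⟩ : TX n (r+2) (r+1)))
      (of (⟨lam', hIl'⟩ : TX n (r+2) (r+1)) * of (⟨rho', hIr'⟩ : TX n (r+2) (r+1))) := by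
  classical
  have hε1 : ∀ x, rho (lam x) = ε x := fun x => congrFun he1 x
  have hε2 : ∀ x, rho' (lam' x) = ε x := fun x => congrFun he2 x
  set μm : Tn n := sel (lam : Fin n → Fin n) (lam' : Fin n → Fin n) with hμm
  have hsel1 : ∀ x, lam (μm x) = lam x := fun x => (sel_spec _ _ x).1
  have hsel2 : ∀ x, lam' (μm x) = lam' x := fun x => (sel_spec _ _ x).2
  have hμle : trank μm ≤ r + 2 := le_trans (sel_card_le _ _) hpair
  have hμge : r + 1 ≤ trank μm := by
    have hsub : rim lam ⊆ Finset.image (lam : Fin n → Fin n) (rim μm) := by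
      intro y hy
      obtain ⟨x, rfl⟩ := mem_rim.1 hy
      exact Finset.mem_image.2 ⟨μm x, mem_rim.2 ⟨x, rfl⟩, hsel1 x⟩
    calc r + 1 = (rim lam).card := by rw [← trank_rim, hrl]
      _ ≤ (Finset.image (lam : Fin n → Fin n) (rim μm)).card := Finset.card_le_card hsub
      _ ≤ (rim μm).card := Finset.card_image_le
      _ = trank μm := (trank_rim μm).symm
  obtain ⟨z, hz⟩ : ∃ z, z ∉ rim μm := by
    apply exists_not_mem
    rw [← trank_rim]
    omega
  obtain ⟨u, hu⟩ := mem_rim.1 ht1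
  obtain ⟨u', hu'⟩ := mem_rim.1 ht2
  have huW : u ∉ rim lam := by
    intro h
    obtain ⟨x, rfl⟩ := mem_rim.1 h
    exact htW (by rw [← hu, hε1]; exact mem_rim.2 ⟨x, rfl⟩)
  have huW' : u' ∉ rim lam' := by
    intro h
    obtain ⟨x, rfl⟩ := mem_rim.1 h
    exact htW (by rw [← hu', hε2]; exact mem_rim.2 ⟨x, rfl⟩)
  set ν : Tn n := (fun y => if y ∈ rim μm then lam y else u) with hν
  set ν' : Tn n := (fun y => if y ∈ rim μm then lam' y else u') with hν'
  have h1 : μm * ν = lam := by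
    funext x
    rw [mul_app]
    simp only [hν, if_pos (mem_rim.2 ⟨x, rfl⟩)]
    exact hsel1 x
  have h2 : μm * ν' = lam' := by
    funext x
    rw [mul_app]
    simp only [hν', if_pos (mem_rim.2 ⟨x, rfl⟩)]
    exact hsel2 x
  have hσeq : ν * rho = ν' * rho' := by
    funext y
    rw [mul_app, mul_app]
    by_cases hy : y ∈ rim μm
    · simp only [hν, hν', if_pos hy, hε1, hε2]
    · simp only [hν, hν', if_neg hy, hu, hu']
  have hrimν : rim ν = insert u (rim lam) := by
    apply Finset.Subset.antisymm
    · intro y hy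
      obtain ⟨x, rfl⟩ := mem_rim.1 hy
      by_cases hx : x ∈ rim μm
      · simp only [hν, if_pos hx]
        exact Finset.mem_insert_of_mem (mem_rim.2 ⟨x, rfl⟩)
      · simp only [hν, if_neg hx]
        exact Finset.mem_insert_self _ _
    · intro y hy
      rcases Finset.mem_insert.1 hy with h | h
      · exact mem_rim.2 ⟨z, by simp only [hν, if_neg hz, h]⟩
      · obtain ⟨x, rfl⟩ := mem_rim.1 h
        refine mem_rim.2 ⟨μm x, ?_⟩
        simp only [hν, if_pos (mem_rim.2 ⟨x, rfl⟩)]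
        exact hsel1 x
  have hrimν' : rim ν' = insert u' (rim lam') := by
    apply Finset.Subset.antisymm
    · intro y hy
      obtain ⟨x, rfl⟩ := mem_rim.1 hy
      by_cases hx : x ∈ rim μm
      · simp only [hν', if_pos hx]
        exact Finset.mem_insert_of_mem (mem_rim.2 ⟨x, rfl⟩)
      · simp only [hν', if_neg hx]
        exact Finset.mem_insert_self _ _
    · intro y hy
      rcases Finset.mem_insert.1 hy with h | h
      · exact mem_rim.2 ⟨z, by simp only [hν', if_neg hz, h]⟩
      · obtain ⟨x, rfl⟩ := mem_rim.1 h
        refine mem_rim.2 ⟨μm x, ?_⟩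
        simp only [hν', if_pos (mem_rim.2 ⟨x, rfl⟩)]
        exact hsel2 x
  have hIν : In r ν := by
    rw [In, trank_rim, hrimν, Finset.card_insert_of_notMem huW, ← trank_rim, hrl]
    omega
  have hIν' : In r ν' := by
    rw [In, trank_rim, hrimν', Finset.card_insert_of_notMem huW', ← trank_rim, hrl']
    omega
  have hrimσ : rim (ν * rho) = insert t (rim ε) := by
    apply Finset.Subset.antisymm
    · intro y hy
      obtain ⟨x, rfl⟩ := mem_rim.1 hy
      rw [mul_app]
      by_cases hx : x ∈ rim μm
      · simp only [hν, if_pos hx, hε1]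
        exact Finset.mem_insert_of_mem (mem_rim.2 ⟨x, rfl⟩)
      · simp only [hν, if_neg hx, hu]
        exact Finset.mem_insert_self _ _
    · intro y hy
      rcases Finset.mem_insert.1 hy with h | h
      · refine mem_rim.2 ⟨z, ?_⟩
        rw [mul_app]
        simp only [hν, if_neg hz, hu, h]
      · obtain ⟨x, rfl⟩ := mem_rim.1 h
        refine mem_rim.2 ⟨μm x, ?_⟩
        rw [mul_app]
        simp only [hν, if_pos (mem_rim.2 ⟨x, rfl⟩), hsel1, hε1]
  have hIσ : In r (ν * rho) := by
    rw [In, trank_rim, hrimσ, Finset.card_insert_of_notMem htW, ← trank_rim, hrε]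
    omega
  have hIμ : In r μm := ⟨hμge, hμle⟩
  have step1 := relMove (r := r) h1 (rfl : ν * rho = ν * rho) hIl hIμ hIν hIr hIσ
  have step2 := relMove (r := r) h2 (rfl : ν' * rho' = ν' * rho') hIl' hIμ hIν' hIr' (hσeq ▸ hIσ)
  refine ConGen.Rel.trans step1 (ConGen.Rel.trans ?_ (ConGen.Rel.symm step2))
  have : (⟨ν * rho, hIσ⟩ : TX n (r+2) (r+1)) = ⟨ν' * rho', hσeq ▸ hIσ⟩ := Subtype.ext hσeq
  rw [this]
  exact ConGen.Rel.refl _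

end Stmt13

/-- In the full transformation monoid, if `α, β, γ, δ` have rank `r + 1`, `αβ = γδ` and
`rank (αβ) = r`, then `x_α x_β = x_γ x_δ` is a consequence of the Cayley relations among
elements of rank `r + 1` and `r + 2` (assuming `1 ≤ r`, `m < n` and `r + n + 1 ≤ 2m`). -/
theorem stmt_13 (n m r : ℕ) (hm : m < n) (hr₁ : 1 ≤ r) (hr : r + n + 1 ≤ 2 * m)
    (α β γ δ : Tn n)
    (hα : trank α = r + 1) (hβ : trank β = r + 1)
    (hγ : trank γ = r + 1) (hδ : trank δ = r + 1)
    (heq : α * β = γ * δ) (hrank : trank (α * β) = r) :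
    conGen (TRel n (r + 2) (r + 1))
      (FreeSemigroup.of (⟨α, by omega⟩ : TX n (r + 2) (r + 1)) *
        FreeSemigroup.of (⟨β, by omega⟩ : TX n (r + 2) (r + 1)))
      (FreeSemigroup.of (⟨γ, by omega⟩ : TX n (r + 2) (r + 1)) *
        FreeSemigroup.of (⟨δ, by omega⟩ : TX n (r + 2) (r + 1))) := by
  classical
  open Stmt13 in
  haveI : NeZero n := ⟨by omega⟩
  have hn : r + 3 ≤ n := by omega
  set ε : Tn n := α * β with hεdef
  have hγδ : γ * δ = ε := heq.symm
  have hrε : trank ε = r := hrank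
  have hε1 : ∀ x, β (α x) = ε x := fun x => rfl
  have hε2 : ∀ x, δ (γ x) = ε x := fun x => (congrFun hγδ x)
  have hrefα : ∀ x y, α x = α y → ε x = ε y := by
    intro x y h
    rw [← hε1, ← hε1, h]
  have hrefγ : ∀ x y, γ x = γ y → ε x = ε y := by
    intro x y h
    rw [← hε2, ← hε2, h]
  obtain ⟨a, a', w₀, hnea, ⟨x₀, hx₀⟩, ⟨y₀, hy₀⟩, hfa, hfa', hdich⟩ :=
    Stmt13.split_unique (α : Fin n → Fin n) (ε : Fin n → Fin n) hrefα
      (by show trank ε + 1 = trank α; omega)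
  obtain ⟨g, g', w₁, hneg, ⟨u₀, hu₀⟩, ⟨v₀, hv₀⟩, hga, hga', hgdich⟩ :=
    Stmt13.split_unique (γ : Fin n → Fin n) (ε : Fin n → Fin n) hrefγ
      (by show trank ε + 1 = trank γ; omega)
  have hw₀ : ε x₀ = w₀ := hfa x₀ hx₀
  have hw₁ : ε u₀ = w₁ := hga u₀ hu₀
  have hw₀W : w₀ ∈ rim ε := mem_rim.2 ⟨x₀, hw₀⟩
  have hw₁W : w₁ ∈ rim ε := mem_rim.2 ⟨u₀, hw₁⟩
  have A2 : ∀ x y, ε x = ε y → ε x ≠ w₀ → α x = α y := by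
    intro x y h hno
    by_contra hxy
    rcases hdich x y h hxy with ⟨h1, -⟩ | ⟨h1, -⟩
    · exact hno (hfa x h1)
    · exact hno (hfa' x h1)
  have A1 : ∀ x, ε x = w₀ → α x = a ∨ α x = a' := by
    intro x hx
    by_cases h : α x = α x₀
    · left; rw [h, hx₀]
    · rcases hdich x x₀ (by rw [hx, hw₀]) h with ⟨h1, -⟩ | ⟨h1, -⟩
      · left; exact h1
      · right; exact h1
  have G2 : ∀ x y, ε x = ε y → ε x ≠ w₁ → γ x = γ y := by
    intro x y h hno
    by_contra hxy
    rcases hgdich x y h hxy with ⟨h1, -⟩ | ⟨h1, -⟩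
    · exact hno (hga x h1)
    · exact hno (hga' x h1)
  have G1 : ∀ x, ε x = w₁ → γ x = g ∨ γ x = g' := by
    intro x hx
    by_cases h : γ x = γ u₀
    · left; rw [h, hu₀]
    · rcases hgdich x u₀ (by rw [hx, hw₁]) h with ⟨h1, -⟩ | ⟨h1, -⟩
      · left; exact h1
      · right; exact h1
  obtain ⟨t, htW⟩ : ∃ t, t ∉ rim ε := Stmt13.exists_not_mem (by rw [← trank_rim, hrε]; omega)
  -- the canonical right factors
  obtain ⟨ρα, hραeq, hραrim⟩ := Stmt13.rhoFor ε α t hrefα (by omega)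
  obtain ⟨ργ, hργeq, hργrim⟩ := Stmt13.rhoFor ε γ t hrefγ (by omega)
  have hραrank : trank ρα = r + 1 := by
    rw [trank_rim, hραrim, Finset.card_insert_of_notMem htW, ← trank_rim, hrε]
  have hργrank : trank ργ = r + 1 := by
    rw [trank_rim, hργrim, Finset.card_insert_of_notMem htW, ← trank_rim, hrε]
  have htρα : t ∈ rim ρα := by rw [hραrim]; exact Finset.mem_insert_self _ _
  have htργ : t ∈ rim ργ := by rw [hργrim]; exact Finset.mem_insert_self _ _
  have Iα : In r α := ⟨by omega, by omega⟩
  have Iβ : In r β := ⟨by omega, by omega⟩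
  have Iγ : In r γ := ⟨by omega, by omega⟩
  have Iδ : In r δ := ⟨by omega, by omega⟩
  have Iρα : In r ρα := ⟨by omega, by omega⟩
  have Iργ : In r ργ := ⟨by omega, by omega⟩
  -- first and last steps
  have stepL1 : Rel n r (FreeSemigroup.of (⟨α, Iα⟩ : TX n (r+2) (r+1)) * FreeSemigroup.of ⟨β, Iβ⟩)
      (FreeSemigroup.of (⟨α, Iα⟩ : TX n (r+2) (r+1)) * FreeSemigroup.of ⟨ρα, Iρα⟩) :=
    Stmt13.lemL hn ε α β ρα hεdef.symm hραeq hα hβ hραrank hrε Iα Iβ Iρα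
  have stepL2 : Rel n r (FreeSemigroup.of (⟨γ, Iγ⟩ : TX n (r+2) (r+1)) * FreeSemigroup.of ⟨δ, Iδ⟩)
      (FreeSemigroup.of (⟨γ, Iγ⟩ : TX n (r+2) (r+1)) * FreeSemigroup.of ⟨ργ, Iργ⟩) :=
    Stmt13.lemL hn ε γ δ ργ hγδ hργeq hγ hδ hργrank hrε Iγ Iδ Iργ
  -- the middle step
  have middle : Rel n r
      (FreeSemigroup.of (⟨α, Iα⟩ : TX n (r+2) (r+1)) * FreeSemigroup.of ⟨ρα, Iρα⟩)
      (FreeSemigroup.of (⟨γ, Iγ⟩ : TX n (r+2) (r+1)) * FreeSemigroup.of ⟨ργ, Iργ⟩) := by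
    by_cases hww : w₀ = w₁
    · -- same split class
      subst hww
      by_cases hE1 : ∃ x, α x = a ∧ γ x = g
      · by_cases hE2 : ∃ x, α x = a ∧ γ x = g'
        · by_cases hE3 : ∃ x, α x = a' ∧ γ x = g
          · by_cases hE4 : ∃ x, α x = a' ∧ γ x = g'
            · -- all four pieces nonempty: interpolate through η
              obtain ⟨x₁, hx₁a, hx₁g⟩ := hE1
              obtain ⟨x₂, hx₂a, hx₂g⟩ := hE2
              set η : Tn n :=
                (fun x => if ε x = w₀ then (if α x = a ∧ γ x = g then a else a') else α x)
                with hη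
              have hηoff : ∀ x, ε x ≠ w₀ → η x = α x := by
                intro x hx
                simp only [hη, if_neg hx]
              have hηnotaa' : ∀ x, ε x ≠ w₀ → η x ≠ a ∧ η x ≠ a' := by
                intro x hx
                rw [hηoff x hx]
                constructor
                · intro h; exact hx (hfa x h)
                · intro h; exact hx (hfa' x h)
              have hηval : ∀ x, ε x = w₀ → η x = a ∨ η x = a' := by
                intro x hx
                simp only [hη, if_pos hx]
                by_cases h : α x = a ∧ γ x = g
                · left; rw [if_pos h]
                · right; rw [if_neg h]
              have hrefη : ∀ x y, η x = η y → ε x = ε y := by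
                intro x y h
                by_cases hx : ε x = w₀ <;> by_cases hy : ε y = w₀
                · rw [hx, hy]
                · exfalso
                  rcases hηval x hx with h1 | h1
                  · exact (hηnotaa' y hy).1 (by rw [← h, h1])
                  · exact (hηnotaa' y hy).2 (by rw [← h, h1])
                · exfalso
                  rcases hηval y hy with h1 | h1
                  · exact (hηnotaa' x hx).1 (by rw [h, h1])
                  · exact (hηnotaa' x hx).2 (by rw [h, h1])
                · rw [hηoff x hx, hηoff y hy] at h
                  exact hrefα x y h
              have hrimη : rim η = rim α := by
                apply Finset.Subset.antisymm
                · intro y hy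
                  obtain ⟨x, rfl⟩ := mem_rim.1 hy
                  by_cases hx : ε x = w₀
                  · rcases hηval x hx with h1 | h1
                    · rw [h1]; exact mem_rim.2 ⟨x₀, hx₀⟩
                    · rw [h1]; exact mem_rim.2 ⟨y₀, hy₀⟩
                  · rw [hηoff x hx]; exact mem_rim.2 ⟨x, rfl⟩
                · intro y hy
                  obtain ⟨x, rfl⟩ := mem_rim.1 hy
                  by_cases hx : ε x = w₀
                  · rcases A1 x hx with h1 | h1
                    · refine mem_rim.2 ⟨x₁, ?_⟩
                      have : ε x₁ = w₀ := hfa x₁ hx₁a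
                      simp only [hη, if_pos this, if_pos (And.intro hx₁a hx₁g)]
                      rw [h1]
                    · refine mem_rim.2 ⟨x₂, ?_⟩
                      have hεx₂ : ε x₂ = w₀ := hfa x₂ hx₂a
                      have : ¬(α x₂ = a ∧ γ x₂ = g) := by
                        rintro ⟨-, hc⟩
                        exact hneg (by rw [← hx₂g, hc])
                      simp only [hη, if_pos hεx₂, if_neg this]
                      rw [h1]
                  · exact mem_rim.2 ⟨x, (hηoff x hx)⟩
              have hrankη : trank η = r + 1 := by
                rw [trank_rim, hrimη, ← trank_rim, hα]
              have Iη : In r η := ⟨by omega, by omega⟩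
              obtain ⟨ρη, hρηeq, hρηrim⟩ := Stmt13.rhoFor ε η t hrefη (by omega)
              have hρηrank : trank ρη = r + 1 := by
                rw [trank_rim, hρηrim, Finset.card_insert_of_notMem htW, ← trank_rim, hrε]
              have htρη : t ∈ rim ρη := by rw [hρηrim]; exact Finset.mem_insert_self _ _
              have Iρη : In r ρη := ⟨by omega, by omega⟩
              -- pairing bounds
              have hcardW : (rim ε \ {w₀}).card = r - 1 := by
                rw [Finset.card_sdiff_of_subset (Finset.singleton_subset_iff.2 hw₀W),
                  Finset.card_singleton, ← trank_rim, hrε]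
              have hpair1 :
                  (Finset.image (fun x => (α x, η x)) Finset.univ).card ≤ r + 2 := by
                have := Stmt13.pairing_card_le ε α η {w₀}
                    ({(a, a), (a, a'), (a', a')} : Finset (Fin n × Fin n))
                    (by
                      intro x y h hno
                      rw [Finset.mem_singleton] at hno
                      refine ⟨A2 x y h hno, ?_⟩
                      rw [hηoff x hno, hηoff y (by rw [← h]; exact hno)]
                      exact A2 x y h hno)
                    (by
                      intro x hx
                      rw [Finset.mem_singleton] at hx
                      rcases A1 x hx with h1 | h1
                      · rcases hηval x hx with h2 | h2 <;> rw [h1, h2] <;> simp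
                      · have h2 : η x = a' := by
                          simp only [hη, if_pos hx]
                          rw [if_neg]
                          rintro ⟨hc, -⟩
                          exact hnea (by rw [← h1, hc])
                        rw [h1, h2]; simp)
                have hS3 : ({(a, a), (a, a'), (a', a')} : Finset (Fin n × Fin n)).card ≤ 3 := by
                  apply le_trans (Finset.card_insert_le _ _)
                  have := Finset.card_insert_le ((a, a') : Fin n × Fin n) {(a', a')}
                  simp only [Finset.card_singleton] at this ⊢
                  omega
                have hr2 : 1 ≤ r := hr₁
                omega
              have hpair2 :
                  (Finset.image (fun x => (η x, γ x)) Finset.univ).card ≤ r + 2 := by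
                have := Stmt13.pairing_card_le ε η γ {w₀}
                    ({(a, g), (a', g), (a', g')} : Finset (Fin n × Fin n))
                    (by
                      intro x y h hno
                      rw [Finset.mem_singleton] at hno
                      refine ⟨?_, G2 x y h hno⟩
                      rw [hηoff x hno, hηoff y (by rw [← h]; exact hno)]
                      exact A2 x y h hno)
                    (by
                      intro x hx
                      rw [Finset.mem_singleton] at hx
                      by_cases hc : α x = a ∧ γ x = g
                      · have h2 : η x = a := by simp only [hη, if_pos hx, if_pos hc]
                        rw [h2, hc.2]; simp
                      · have h2 : η x = a' := by simp only [hη, if_pos hx, if_neg hc]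
                        rcases G1 x hx with h3 | h3 <;> rw [h2, h3] <;> simp)
                have hS3 : ({(a, g), (a', g), (a', g')} : Finset (Fin n × Fin n)).card ≤ 3 := by
                  apply le_trans (Finset.card_insert_le _ _)
                  have := Finset.card_insert_le ((a', g) : Fin n × Fin n) {(a', g')}
                  simp only [Finset.card_singleton] at this ⊢
                  omega
                have hr2 : 1 ≤ r := hr₁
                omega
              have m1 := Stmt13.lemS hn ε α η ρα ρη t hραeq hρηeq hα hrankη hραrank hρηrank
                hrε htW htρα htρη hpair1 Iα Iη Iρα Iρη
              have m2 := Stmt13.lemS hn ε η γ ρη ργ t hρηeq hργeq hrankη hγ hρηrank hργrank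
                hrε htW htρη htργ hpair2 Iη Iγ Iρη Iργ
              exact ConGen.Rel.trans m1 m2
            · -- piece (a', g') empty
              refine Stmt13.lemS hn ε α γ ρα ργ t hραeq hργeq hα hγ hραrank hργrank hrε htW
                htρα htργ ?_ Iα Iγ Iρα Iργ
              have := Stmt13.pairing_card_le ε α γ {w₀}
                  ({(a, g), (a, g'), (a', g)} : Finset (Fin n × Fin n))
                  (by
                    intro x y h hno
                    rw [Finset.mem_singleton] at hno
                    exact ⟨A2 x y h hno, G2 x y h hno⟩)
                  (by
                    intro x hx
                    rw [Finset.mem_singleton] at hx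
                    rcases A1 x hx with h1 | h1 <;> rcases G1 x hx with h2 | h2 <;>
                      rw [h1, h2] <;> simp
                    exact absurd ⟨x, h1, h2⟩ hE4)
              have hcardW : (rim ε \ {w₀}).card = r - 1 := by
                rw [Finset.card_sdiff_of_subset (Finset.singleton_subset_iff.2 hw₀W),
                  Finset.card_singleton, ← trank_rim, hrε]
              have hS3 : ({(a, g), (a, g'), (a', g)} : Finset (Fin n × Fin n)).card ≤ 3 := by
                apply le_trans (Finset.card_insert_le _ _)
                have := Finset.card_insert_le ((a, g') : Fin n × Fin n) {(a', g)}
                simp only [Finset.card_singleton] at this ⊢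
                omega
              omega
          · -- piece (a', g) empty
            refine Stmt13.lemS hn ε α γ ρα ργ t hραeq hργeq hα hγ hραrank hργrank hrε htW
              htρα htργ ?_ Iα Iγ Iρα Iργ
            have := Stmt13.pairing_card_le ε α γ {w₀}
                ({(a, g), (a, g'), (a', g')} : Finset (Fin n × Fin n))
                (by
                  intro x y h hno
                  rw [Finset.mem_singleton] at hno
                  exact ⟨A2 x y h hno, G2 x y h hno⟩)
                (by
                  intro x hx
                  rw [Finset.mem_singleton] at hx
                  rcases A1 x hx with h1 | h1 <;> rcases G1 x hx with h2 | h2 <;>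
                    rw [h1, h2] <;> simp
                  exact absurd ⟨x, h1, h2⟩ hE3)
            have hcardW : (rim ε \ {w₀}).card = r - 1 := by
              rw [Finset.card_sdiff_of_subset (Finset.singleton_subset_iff.2 hw₀W),
                Finset.card_singleton, ← trank_rim, hrε]
            have hS3 : ({(a, g), (a, g'), (a', g')} : Finset (Fin n × Fin n)).card ≤ 3 := by
              apply le_trans (Finset.card_insert_le _ _)
              have := Finset.card_insert_le ((a, g') : Fin n × Fin n) {(a', g')}
              simp only [Finset.card_singleton] at this ⊢
              omega
            omega
        · -- piece (a, g') empty
          refine Stmt13.lemS hn ε α γ ρα ργ t hραeq hργeq hα hγ hραrank hργrank hrε htW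
            htρα htργ ?_ Iα Iγ Iρα Iργ
          have := Stmt13.pairing_card_le ε α γ {w₀}
              ({(a, g), (a', g), (a', g')} : Finset (Fin n × Fin n))
              (by
                intro x y h hno
                rw [Finset.mem_singleton] at hno
                exact ⟨A2 x y h hno, G2 x y h hno⟩)
              (by
                intro x hx
                rw [Finset.mem_singleton] at hx
                rcases A1 x hx with h1 | h1 <;> rcases G1 x hx with h2 | h2 <;>
                  rw [h1, h2] <;> simp
                exact absurd ⟨x, h1, h2⟩ hE2)
          have hcardW : (rim ε \ {w₀}).card = r - 1 := by
            rw [Finset.card_sdiff_of_subset (Finset.singleton_subset_iff.2 hw₀W),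
              Finset.card_singleton, ← trank_rim, hrε]
          have hS3 : ({(a, g), (a', g), (a', g')} : Finset (Fin n × Fin n)).card ≤ 3 := by
            apply le_trans (Finset.card_insert_le _ _)
            have := Finset.card_insert_le ((a', g) : Fin n × Fin n) {(a', g')}
            simp only [Finset.card_singleton] at this ⊢
            omega
          omega
      · -- piece (a, g) empty
        refine Stmt13.lemS hn ε α γ ρα ργ t hραeq hργeq hα hγ hραrank hργrank hrε htW
          htρα htργ ?_ Iα Iγ Iρα Iργ
        have := Stmt13.pairing_card_le ε α γ {w₀}
            ({(a, g'), (a', g), (a', g')} : Finset (Fin n × Fin n))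
            (by
              intro x y h hno
              rw [Finset.mem_singleton] at hno
              exact ⟨A2 x y h hno, G2 x y h hno⟩)
            (by
              intro x hx
              rw [Finset.mem_singleton] at hx
              rcases A1 x hx with h1 | h1 <;> rcases G1 x hx with h2 | h2 <;>
                rw [h1, h2] <;> simp
              exact absurd ⟨x, h1, h2⟩ hE1)
        have hcardW : (rim ε \ {w₀}).card = r - 1 := by
          rw [Finset.card_sdiff_of_subset (Finset.singleton_subset_iff.2 hw₀W),
            Finset.card_singleton, ← trank_rim, hrε]
        have hS3 : ({(a, g'), (a', g), (a', g')} : Finset (Fin n × Fin n)).card ≤ 3 := by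
          apply le_trans (Finset.card_insert_le _ _)
          have := Finset.card_insert_le ((a', g) : Fin n × Fin n) {(a', g')}
          simp only [Finset.card_singleton] at this ⊢
          omega
        omega
    · -- different split classes: direct
      refine Stmt13.lemS hn ε α γ ρα ργ t hραeq hργeq hα hγ hραrank hργrank hrε htW
        htρα htργ ?_ Iα Iγ Iρα Iργ
      have hB2 : ({w₀, w₁} : Finset (Fin n)).card = 2 := by
        rw [Finset.card_insert_of_notMem (by simpa using hww), Finset.card_singleton]
      have hBsub : ({w₀, w₁} : Finset (Fin n)) ⊆ rim ε := by
        intro x hx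
        rcases Finset.mem_insert.1 hx with h | h
        · rw [h]; exact hw₀W
        · rw [Finset.mem_singleton.1 h]; exact hw₁W
      have hr2 : 2 ≤ r := by
        have := Finset.card_le_card hBsub
        rw [hB2, ← trank_rim, hrε] at this
        exact this
      have := Stmt13.pairing_card_le ε α γ ({w₀, w₁} : Finset (Fin n))
          ({(a, γ x₀), (a', γ x₀), (α u₀, g), (α u₀, g')} : Finset (Fin n × Fin n))
          (by
            intro x y h hno
            simp only [Finset.mem_insert, Finset.mem_singleton, not_or] at hno
            exact ⟨A2 x y h hno.1, G2 x y h hno.2⟩)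
          (by
            intro x hx
            rcases Finset.mem_insert.1 hx with h | h
            · have hγx : γ x = γ x₀ := G2 x x₀ (by rw [h, hw₀]) (by rw [h]; exact hww)
              rcases A1 x h with h1 | h1 <;> rw [h1, hγx] <;> simp
            · rw [Finset.mem_singleton] at h
              have hαx : α x = α u₀ := A2 x u₀ (by rw [h, hw₁]) (by rw [h]; exact fun hc => hww hc.symm)
              rcases G1 x h with h1 | h1 <;> rw [h1, hαx] <;> simp)
      have hcardW : (rim ε \ {w₀, w₁}).card = r - 2 := by
        rw [Finset.card_sdiff_of_subset hBsub, hB2, ← trank_rim, hrε]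
      have hS4 :
          ({(a, γ x₀), (a', γ x₀), (α u₀, g), (α u₀, g')} : Finset (Fin n × Fin n)).card ≤ 4 := by
        apply le_trans (Finset.card_insert_le _ _)
        have h1 := Finset.card_insert_le ((a', γ x₀) : Fin n × Fin n) {(α u₀, g), (α u₀, g')}
        have h2 := Finset.card_insert_le ((α u₀, g) : Fin n × Fin n) {(α u₀, g')}
        simp only [Finset.card_singleton] at h1 h2 ⊢
        omega
      omega
  exact ConGen.Rel.trans stepL1 (ConGen.Rel.trans middle (ConGen.Rel.symm stepL2))
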